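/- Let G be a cograph on vertex set V and let U ⊆ V be nonempty. Then there exists a subset W ⊆ V such that (1) |U|/4 ≤ |U ∩ W| ≤ max(|U|/2, 1), and (2) for every vertex v ∈ V \ W, either W ⊆ N(v) or W ∩ N(v) = ∅. -/

import Mathlib

set_option linter.unusedSectionVars false

/-- `G` is a cograph, i.e. it has no induced path on four vertices. -/
def IsCograph {V : Type*} (G : SimpleGraph V) : Prop :=
  ¬∃ a b c d : V, a ≠ c ∧ a ≠ d ∧ b ≠ d ∧
    G.Adj a b ∧ G.Adj b c ∧ G.Adj c d ∧ ¬G.Adj a c ∧ ¬G.Adj a d ∧ ¬G.Adj b d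

namespace Stmt3

variable {V : Type*} [DecidableEq V]

def Rel (H : SimpleGraph V) (S : Finset V) (u v : V) : Prop :=
  u ∈ S ∧ v ∈ S ∧ H.Adj u v

def Reach (H : SimpleGraph V) (S : Finset V) : V → V → Prop :=
  Relation.ReflTransGen (Rel H S)

noncomputable def comp (H : SimpleGraph V) (S : Finset V) (u : V) : Finset V :=
  @Finset.filter _ (fun v => Reach H S u v) (Classical.decPred _) S

lemma mem_comp {H : SimpleGraph V} {S : Finset V} {u v : V} :
    v ∈ comp H S u ↔ v ∈ S ∧ Reach H S u v := by
  unfold comp; exact @Finset.mem_filter _ _ (Classical.decPred _) _ _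

lemma reach_symm {H : SimpleGraph V} {S : Finset V} {u v : V}
    (h : Reach H S u v) : Reach H S v u :=
  (@Relation.ReflTransGen.symmetric _ _ ⟨fun _ _ h => ⟨h.2.1, h.1, h.2.2.symm⟩⟩).symm _ _ h

lemma comp_subset {H : SimpleGraph V} {S : Finset V} {u : V} : comp H S u ⊆ S :=
  fun _ h => (mem_comp.1 h).1

lemma self_mem_comp {H : SimpleGraph V} {S : Finset V} {u : V} (h : u ∈ S) :
    u ∈ comp H S u := mem_comp.2 ⟨h, Relation.ReflTransGen.refl⟩

lemma adj_mem_comp {H : SimpleGraph V} {S : Finset V} {u w v : V}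
    (hw : w ∈ comp H S u) (hv : v ∈ S) (hadj : H.Adj w v) : v ∈ comp H S u := by
  rcases mem_comp.1 hw with ⟨hwS, hr⟩
  exact mem_comp.2 ⟨hv, hr.tail ⟨hwS, hv, hadj⟩⟩

/-- If some pair in `S` is not `H`-reachable, every component is a proper subset. -/
lemma comp_ne {H : SimpleGraph V} {S : Finset V} {p q : V}
    (hp : p ∈ S) (hq : q ∈ S) (hpq : ¬Reach H S p q) (u : V) : comp H S u ≠ S := by
  intro h
  have h1 : Reach H S u p := (mem_comp.1 (h.symm ▸ hp)).2
  have h2 : Reach H S u q := (mem_comp.1 (h.symm ▸ hq)).2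
  exact hpq ((reach_symm h1).trans h2)

lemma notmem_comp_of_notmem {H : SimpleGraph V} {S : Finset V} {u v w : V}
    (hv : v ∈ S) (hvu : v ∉ comp H S u) (hw : w ∈ comp H S v) : w ∉ comp H S u := by
  intro hwu
  exact hvu (mem_comp.2 ⟨hv, (mem_comp.1 hwu).2.trans (reach_symm (mem_comp.1 hw).2)⟩)

/-- non-adjacency across a component boundary. -/
lemma not_adj_of_notmem_comp {H : SimpleGraph V} {S : Finset V} {u v w : V}
    (hv : v ∈ S) (hvu : v ∉ comp H S u) (hw : w ∈ comp H S u) : ¬H.Adj w v :=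
  fun h => hvu (adj_mem_comp hw hv h)

/-- closure lemma: if `x` has no neighbour in the component of `c` in `S.erase x`,
then everything reachable from `c` in `S` stays in that component. -/
lemma reach_erase {H : SimpleGraph V} {S : Finset V} {x c : V}
    (hc : c ∈ S.erase x)
    (hx : ∀ w ∈ comp H (S.erase x) c, ¬H.Adj x w) :
    ∀ v, Reach H S c v → v ∈ comp H (S.erase x) c := by
  intro v h
  induction h with
  | refl => exact self_mem_comp hc
  | @tail b v' _ hrel ih =>
    rcases hrel with ⟨hbS, hvS, hadj⟩
    by_cases hvx : v' = x
    · exact absurd hadj.symm (hvx ▸ hx _ ih)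
    · exact adj_mem_comp ih (Finset.mem_erase.2 ⟨hvx, hvS⟩) hadj

/-- chain lemma: along a reachability path from an `x`-neighbour to an `x`-non-neighbour,
find an edge from a neighbour to a non-neighbour. -/
lemma chain {H : SimpleGraph V} {S : Finset V} {x u : V} (hu : ¬H.Adj x u) :
    ∀ {r : V}, Reach H S r u → H.Adj x r →
      ∃ w w', Rel H S w w' ∧ H.Adj x w ∧ ¬H.Adj x w' ∧ Reach H S r w := by
  intro r h
  induction h using Relation.ReflTransGen.head_induction_on with
  | refl => intro hr; exact absurd hr hu
  | @head a c hac hcu ih =>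
    intro hra
    by_cases hc : H.Adj x c
    · obtain ⟨w, w', h1, h2, h3, h4⟩ := ih hc
      exact ⟨w, w', h1, h2, h3, Relation.ReflTransGen.head hac h4⟩
    · exact ⟨a, c, hac, hra, hc, Relation.ReflTransGen.refl⟩

lemma isCograph_compl {G : SimpleGraph V} (hG : IsCograph G) : IsCograph Gᶜ := by
  rintro ⟨a, b, c, d, hac, had, hbd, hab, hbc, hcd, hnac, hnad, hnbd⟩
  rw [SimpleGraph.compl_adj] at hab hbc hcd
  rw [SimpleGraph.compl_adj] at hnac hnad hnbd
  have gac : G.Adj a c := by by_contra h; exact hnac ⟨hac, h⟩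
  have gad : G.Adj a d := by by_contra h; exact hnad ⟨had, h⟩
  have gbd : G.Adj b d := by by_contra h; exact hnbd ⟨hbd, h⟩
  exact hG ⟨c, a, d, b, hcd.1, hbc.1.symm, hab.1, gac.symm, gad, gbd.symm,
    hcd.2, fun h => hbc.2 h.symm, hab.2⟩


/-- Main step for the dichotomy: if `S.erase x` is `H`-disconnected then `S` is
`H`-disconnected or `Hᶜ`-disconnected. -/
lemma step {H : SimpleGraph V} (hH : IsCograph H) {S : Finset V} {x : V} (hx : x ∈ S)
    (hd : ∃ p ∈ S.erase x, ∃ q ∈ S.erase x, ¬Reach H (S.erase x) p q) :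
    (∃ p ∈ S, ∃ q ∈ S, ¬Reach H S p q) ∨ (∃ p ∈ S, ∃ q ∈ S, ¬Reach Hᶜ S p q) := by
  obtain ⟨p, hp, q, hq, hpq⟩ := hd
  set S' := S.erase x with hS'
  have hS'sub : S' ⊆ S := Finset.erase_subset _ _
  have hpS : p ∈ S := hS'sub hp
  have hqS : q ∈ S := hS'sub hq
  have hqA : q ∉ comp H S' p := fun h => hpq (mem_comp.1 h).2
  -- disjointness of the components of p and q
  have hABdisj : ∀ y, y ∈ comp H S' p → y ∉ comp H S' q := by
    intro y hyA hyB
    exact hpq ((mem_comp.1 hyA).2.trans (reach_symm (mem_comp.1 hyB).2))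
  -- helper to produce the left disjunct from a component with no neighbour of x
  have hleft : ∀ c ∈ S', (∀ w ∈ comp H S' c, ¬H.Adj x w) →
      ∀ z ∈ S, z ∉ comp H S' c → (∃ p ∈ S, ∃ q ∈ S, ¬Reach H S p q) := by
    intro c hc hnbr z hz hznot
    exact ⟨c, hS'sub hc, z, hz, fun h => hznot (reach_erase hc hnbr z h)⟩
  by_cases hA : ∀ w ∈ comp H S' p, ¬H.Adj x w
  · exact Or.inl (hleft p hp hA q hqS hqA)
  by_cases hB : ∀ w ∈ comp H S' q, ¬H.Adj x w
  · refine Or.inl (hleft q hq hB p hpS ?_)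
    exact fun h => hABdisj p (self_mem_comp hp) h
  push_neg at hA hB
  obtain ⟨r, hrA, hxr⟩ := hA
  obtain ⟨s, hsB, hxs⟩ := hB
  -- helper: a component containing both a neighbour and a non-neighbour of x gives a P4
  have hP4 : ∀ c t u' : V, t ∈ comp H S' c → u' ∈ comp H S' c → H.Adj x t → ¬H.Adj x u' →
      ∀ y, y ∈ S' → y ∉ comp H S' c → H.Adj x y → False := by
    intro c t u' ht hu' hxt hxu' y hyS' hyc hxy
    have hreach : Reach H S' t u' := (reach_symm (mem_comp.1 ht).2).trans (mem_comp.1 hu').2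
    obtain ⟨w, w', hrel, hxw, hxw', hrw⟩ := chain hxu' hreach hxt
    have hwC : w ∈ comp H S' c := mem_comp.2 ⟨hrel.1, (mem_comp.1 ht).2.trans hrw⟩
    have hw'C : w' ∈ comp H S' c := adj_mem_comp hwC hrel.2.1 hrel.2.2
    -- P4 : w' - w - x - y
    refine hH ⟨w', w, x, y, ?_, ?_, ?_, hrel.2.2.symm, hxw.symm, hxy, ?_, ?_, ?_⟩
    · exact fun h => (Finset.mem_erase.1 (comp_subset hw'C)).1 h
    · exact fun h => hyc (h ▸ hw'C)
    · exact fun h => hyc (h ▸ hwC)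
    · exact fun h => hxw' h.symm
    · exact not_adj_of_notmem_comp hyS' hyc hw'C
    · exact not_adj_of_notmem_comp hyS' hyc hwC
  have hsS' : s ∈ S' := comp_subset hsB
  have hrS' : r ∈ S' := comp_subset hrA
  have hsA : s ∉ comp H S' p := fun h => hABdisj s h hsB
  have hrB : r ∉ comp H S' q := fun h => hABdisj r hrA h
  by_cases hA2 : ∀ w ∈ comp H S' p, H.Adj x w
  swap
  · push_neg at hA2
    obtain ⟨u, huA, hxu⟩ := hA2
    exact (hP4 p r u hrA huA hxr hxu s hsS' hsA hxs).elim
  by_cases hB2 : ∀ w ∈ comp H S' q, H.Adj x w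
  swap
  · push_neg at hB2
    obtain ⟨u, huB, hxu⟩ := hB2
    exact (hP4 q s u hsB huB hxs hxu r hrS' hrB hxr).elim
  by_cases huniv : ∀ u ∈ S', H.Adj x u
  · refine Or.inr ⟨x, hx, p, hpS, fun h => ?_⟩
    rcases Relation.ReflTransGen.cases_head h with heq | ⟨w, hrel, _⟩
    · exact (Finset.mem_erase.1 hp).1 heq.symm
    · rcases hrel with ⟨_, hwS, hadj⟩
      rcases (SimpleGraph.compl_adj _ _ _).1 hadj with ⟨hne, hnadj⟩
      exact hnadj (huniv w (Finset.mem_erase.2 ⟨fun h => hne (h ▸ rfl), hwS⟩))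
  · push_neg at huniv
    obtain ⟨u, huS', hxu⟩ := huniv
    have huA : u ∉ comp H S' p := fun h => hxu (hA2 u h)
    have hpC : p ∉ comp H S' u := by
      intro h
      exact huA (mem_comp.2 ⟨huS', reach_symm (mem_comp.1 h).2⟩)
    by_cases hC : ∀ w ∈ comp H S' u, ¬H.Adj x w
    · exact Or.inl (hleft u huS' hC p hpS hpC)
    · push_neg at hC
      obtain ⟨t, htC, hxt⟩ := hC
      exact (hP4 u t u htC (self_mem_comp huS') hxt hxu p hp hpC
        (hA2 p (self_mem_comp hp))).elim


lemma dich {G : SimpleGraph V} (hG : IsCograph G) :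
    ∀ (n : ℕ) (S : Finset V), S.card ≤ n → 2 ≤ S.card →
      (∃ p ∈ S, ∃ q ∈ S, ¬Reach G S p q) ∨ (∃ p ∈ S, ∃ q ∈ S, ¬Reach Gᶜ S p q) := by
  intro n
  induction n with
  | zero => intro S h1 h2; omega
  | succ n ih =>
    intro S h1 h2
    by_cases hcard : S.card = 2
    · obtain ⟨a, b, hab, rfl⟩ := Finset.card_eq_two.1 hcard
      have haS : a ∈ ({a, b} : Finset V) := by simp
      have hbS : b ∈ ({a, b} : Finset V) := by simp
      by_cases hadj : G.Adj a b
      · refine Or.inr ⟨a, haS, b, hbS, fun h => ?_⟩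
        rcases Relation.ReflTransGen.cases_head h with heq | ⟨w, hrel, _⟩
        · exact hab heq
        · rcases hrel with ⟨_, hwS, hw⟩
          rcases (SimpleGraph.compl_adj _ _ _).1 hw with ⟨hne, hnadj⟩
          rcases Finset.mem_insert.1 hwS with rfl | hwb
          · exact hne rfl
          · exact hnadj (Finset.mem_singleton.1 hwb ▸ hadj)
      · refine Or.inl ⟨a, haS, b, hbS, fun h => ?_⟩
        rcases Relation.ReflTransGen.cases_head h with heq | ⟨w, hrel, _⟩
        · exact hab heq
        · rcases hrel with ⟨_, hwS, hw⟩
          rcases Finset.mem_insert.1 hwS with rfl | hwb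
          · exact G.irrefl hw
          · exact hadj (Finset.mem_singleton.1 hwb ▸ hw)
    · -- S.card ≥ 3
      have h3 : 3 ≤ S.card := by omega
      have h0 : 0 < S.card := by omega
      obtain ⟨x, hx⟩ := Finset.card_pos.1 h0
      have hec : (S.erase x).card = S.card - 1 := Finset.card_erase_of_mem hx
      have e1 : (S.erase x).card ≤ n := by omega
      have e2 : 2 ≤ (S.erase x).card := by omega
      rcases ih (S.erase x) e1 e2 with hd | hd
      · exact step hG hx hd
      · rcases step (isCograph_compl hG) hx hd with h | h
        · exact Or.inr h
        · refine Or.inl ?_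
          rw [compl_compl] at h
          exact h


lemma extract {G H : SimpleGraph V} {P : V → V → Prop} {S U : Finset V} {a : ℕ}
    (hU : U ⊆ S) (ha : 0 < a) (hUa : a ≤ 2 * U.card)
    (hP : ∀ v w, v ∈ S → w ∈ S → v ≠ w → ¬H.Adj w v → P v w)
    (hPd : ∀ (v : V) (W : Finset V), (∀ w ∈ W, P v w) →
      (∀ w ∈ W, G.Adj v w) ∨ (∀ w ∈ W, ¬G.Adj v w))
    (hinv : ∀ v ∉ S, (∀ w ∈ S, G.Adj v w) ∨ (∀ w ∈ S, ¬G.Adj v w))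
    (hdis : ∃ p ∈ S, ∃ q ∈ S, ¬Reach H S p q)
    (hrec : ∀ S' U' : Finset V, S'.card < S.card → U' ⊆ S' → a ≤ 2 * U'.card →
      (∀ v ∉ S', (∀ w ∈ S', G.Adj v w) ∨ (∀ w ∈ S', ¬G.Adj v w)) →
      ∃ W, W ⊆ S' ∧ a ≤ 4 * (U' ∩ W).card ∧ 2 * (U' ∩ W).card ≤ a ∧
        ∀ v ∉ W, (∀ w ∈ W, G.Adj v w) ∨ (∀ w ∈ W, ¬G.Adj v w)) :
    ∃ W, W ⊆ S ∧ a ≤ 4 * (U ∩ W).card ∧ 2 * (U ∩ W).card ≤ a ∧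
      ∀ v ∉ W, (∀ w ∈ W, G.Adj v w) ∨ (∀ w ∈ W, ¬G.Adj v w) := by
  obtain ⟨p, hp, q, hq, hpq⟩ := hdis
  -- conformity for any comp-closed subset of S
  have conf : ∀ W : Finset V, W ⊆ S → (∀ w ∈ W, comp H S w ⊆ W) →
      ∀ v ∉ W, (∀ w ∈ W, G.Adj v w) ∨ (∀ w ∈ W, ¬G.Adj v w) := by
    intro W hWS hWcl v hv
    by_cases hvS : v ∈ S
    · refine hPd v W fun w hw => ?_
      refine hP v w hvS (hWS hw) (fun h => hv (h ▸ hw)) fun hadj => ?_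
      exact hv (hWcl w hw (adj_mem_comp (self_mem_comp (hWS hw)) hvS hadj))
    · rcases hinv v hvS with hl | hr
      · exact Or.inl fun w hw => hl w (hWS hw)
      · exact Or.inr fun w hw => hr w (hWS hw)
  have hcompcl : ∀ u : V, ∀ w ∈ comp H S u, comp H S w ⊆ comp H S u := by
    intro u w hw v hv
    exact mem_comp.2 ⟨(mem_comp.1 hv).1, (mem_comp.1 hw).2.trans (mem_comp.1 hv).2⟩
  by_cases hbig : ∃ u ∈ U, a < 2 * (U ∩ comp H S u).card
  · -- recurse into a heavy component
    obtain ⟨u, huU, hucard⟩ := hbig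
    set C := comp H S u with hC
    have hCS : C ⊆ S := comp_subset
    have hCne : C ≠ S := comp_ne hp hq hpq u
    have hlt : C.card < S.card := Finset.card_lt_card (hCS.ssubset_of_ne hCne)
    have hinv' : ∀ v ∉ C, (∀ w ∈ C, G.Adj v w) ∨ (∀ w ∈ C, ¬G.Adj v w) :=
      conf C hCS (hcompcl u)
    obtain ⟨W, hWC, hlow, hhigh, hconf⟩ :=
      hrec C (U ∩ C) hlt Finset.inter_subset_right (le_of_lt hucard) hinv'
    have hUW : U ∩ C ∩ W = U ∩ W := by
      rw [Finset.inter_assoc, Finset.inter_eq_right.2 hWC]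
    rw [hUW] at hlow hhigh
    exact ⟨W, hWC.trans hCS, hlow, hhigh, hconf⟩
  push_neg at hbig
  by_cases hmid : ∃ u ∈ U, a ≤ 4 * (U ∩ comp H S u).card
  · -- a single component works
    obtain ⟨u, huU, hucard⟩ := hmid
    exact ⟨comp H S u, comp_subset, hucard, hbig u huU,
      conf (comp H S u) comp_subset (hcompcl u)⟩
  push_neg at hmid
  -- all components are light: take a minimal comp-closed family of weight ≥ a/4
  set F := S.powerset.filter
      (fun T => (∀ w ∈ T, comp H S w ⊆ T) ∧ a ≤ 4 * (U ∩ T).card) with hF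
  have hFS : S ∈ F := by
    refine Finset.mem_filter.2 ⟨Finset.mem_powerset.2 le_rfl, fun w _ => comp_subset, ?_⟩
    rw [Finset.inter_eq_left.2 hU]
    omega
  obtain ⟨T, hTF, hTmin⟩ := Finset.exists_min_image _ (fun T => (U ∩ T).card) ⟨S, hFS⟩
  rcases Finset.mem_filter.1 hTF with ⟨hTpow, hTcl, hTa⟩
  have hTS : T ⊆ S := Finset.mem_powerset.1 hTpow
  have hUT : 0 < (U ∩ T).card := by omega
  obtain ⟨u, hu⟩ := Finset.card_pos.1 hUT
  have huU : u ∈ U := (Finset.mem_inter.1 hu).1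
  have huT : u ∈ T := (Finset.mem_inter.1 hu).2
  set C := comp H S u with hC
  have hCsubT : C ⊆ T := hTcl u huT
  have huC : u ∈ C := self_mem_comp (hTS huT)
  set T' := T \ C with hT'
  have hT'S : T' ⊆ S := (Finset.sdiff_subset).trans hTS
  have hT'cl : ∀ w ∈ T', comp H S w ⊆ T' := by
    intro w hw v hv
    rcases Finset.mem_sdiff.1 hw with ⟨hwT, hwC⟩
    refine Finset.mem_sdiff.2 ⟨hTcl w hwT hv, fun hvC => hwC ?_⟩
    exact mem_comp.2 ⟨hTS hwT, (mem_comp.1 hvC).2.trans (reach_symm (mem_comp.1 hv).2)⟩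
  have hsplit : (U ∩ T).card = (U ∩ T').card + (U ∩ C).card := by
    have h1 : T' ∪ C = T := Finset.sdiff_union_of_subset hCsubT
    have h2 : U ∩ T = (U ∩ T') ∪ (U ∩ C) := by
      rw [← Finset.inter_union_distrib_left, h1]
    rw [h2]
    refine Finset.card_union_of_disjoint ?_
    exact Finset.disjoint_left.2 fun y hy hy' =>
      (Finset.mem_sdiff.1 (Finset.mem_inter.1 hy).2).2 (Finset.mem_inter.1 hy').2
  have hUC1 : 1 ≤ (U ∩ C).card :=
    Finset.card_pos.2 ⟨u, Finset.mem_inter.2 ⟨huU, huC⟩⟩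
  have hT'small : 4 * (U ∩ T').card < a := by
    by_contra h
    push_neg at h
    have hT'F : T' ∈ F :=
      Finset.mem_filter.2 ⟨Finset.mem_powerset.2 hT'S, hT'cl, h⟩
    have := hTmin T' hT'F
    omega
  have hClight : 4 * (U ∩ C).card < a := hmid u huU
  refine ⟨T, hTS, hTa, by omega, conf T hTS hTcl⟩


lemma aux {G : SimpleGraph V} (hG : IsCograph G) {a : ℕ} (ha : 5 ≤ a) :
    ∀ (n : ℕ) (S U : Finset V), S.card ≤ n → U ⊆ S → a ≤ 2 * U.card →
      (∀ v ∉ S, (∀ w ∈ S, G.Adj v w) ∨ (∀ w ∈ S, ¬G.Adj v w)) →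
      ∃ W, W ⊆ S ∧ a ≤ 4 * (U ∩ W).card ∧ 2 * (U ∩ W).card ≤ a ∧
        ∀ v ∉ W, (∀ w ∈ W, G.Adj v w) ∨ (∀ w ∈ W, ¬G.Adj v w) := by
  intro n
  induction n with
  | zero =>
    intro S U h1 h2 h3 _
    have := Finset.card_le_card h2
    omega
  | succ n ih =>
    intro S U h1 hUS hUa hinv
    have hUcard := Finset.card_le_card hUS
    have hS2 : 2 ≤ S.card := by omega
    have ha0 : 0 < a := by omega
    rcases dich hG S.card S le_rfl hS2 with hd | hd
    · refine extract (P := fun v w => ¬G.Adj v w) hUS ha0 hUa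
        (fun v w _ _ _ h => fun h' => h h'.symm) (fun v W h => Or.inr h) hinv hd ?_
      intro S' U' hlt hU' hUa' hinv'
      exact ih S' U' (by omega) hU' hUa' hinv'
    · refine extract (P := fun v w => G.Adj v w) hUS ha0 hUa
        (fun v w _ _ hne h => ?_) (fun v W h => Or.inl h) hinv hd ?_
      · by_contra hadj
        exact h ((SimpleGraph.compl_adj _ _ _).2 ⟨fun he => hne he.symm, fun h' => hadj h'.symm⟩)
      · intro S' U' hlt hU' hUa' hinv'
        exact ih S' U' (by omega) hU' hUa' hinv'

end Stmt3

/-- for a cograph `G` and nonempty `U ⊆ V` there is `W ⊆ V` with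
`|U|/4 ≤ |U ∩ W| ≤ max(|U|/2, 1)` such that `W` conforms to every vertex outside `W`. -/
theorem stmt_3 {V : Type*} [Fintype V] [DecidableEq V] (G : SimpleGraph V)
    (hG : IsCograph G) (U : Finset V) (hU : U.Nonempty) :
    ∃ W : Finset V,
      (U.card : ℝ) / 4 ≤ ((U ∩ W).card : ℝ) ∧
      ((U ∩ W).card : ℝ) ≤ max ((U.card : ℝ) / 2) 1 ∧
      ∀ v ∉ W, (∀ w ∈ W, G.Adj v w) ∨ (∀ w ∈ W, ¬G.Adj v w) := by
  by_cases hsmall : U.card ≤ 4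
  · obtain ⟨u, hu⟩ := hU
    refine ⟨{u}, ?_, ?_, ?_⟩
    · have : U ∩ {u} = {u} := by
        rw [Finset.inter_eq_right.2 (Finset.singleton_subset_iff.2 hu)]
      rw [this, Finset.card_singleton]
      have : (U.card : ℝ) ≤ 4 := by exact_mod_cast hsmall
      push_cast
      linarith
    · have : U ∩ {u} = {u} := by
        rw [Finset.inter_eq_right.2 (Finset.singleton_subset_iff.2 hu)]
      rw [this, Finset.card_singleton]
      exact_mod_cast le_max_right _ 1
    · intro v hv
      by_cases hadj : G.Adj v u
      · exact Or.inl fun w hw => (Finset.mem_singleton.1 hw) ▸ hadj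
      · exact Or.inr fun w hw => (Finset.mem_singleton.1 hw) ▸ hadj
  · push_neg at hsmall
    have ha : 5 ≤ U.card := hsmall
    obtain ⟨W, _, hlow, hhigh, hconf⟩ :=
      Stmt3.aux hG (a := U.card) ha (Finset.univ.card) Finset.univ U le_rfl
        (Finset.subset_univ U) (by omega)
        (fun v hv => absurd (Finset.mem_univ v) hv)
    refine ⟨W, ?_, ?_, hconf⟩
    · have : (U.card : ℝ) ≤ 4 * ((U ∩ W).card : ℝ) := by exact_mod_cast hlow
      linarith
    · refine le_trans ?_ (le_max_left _ 1)
      have : 2 * ((U ∩ W).card : ℝ) ≤ (U.card : ℝ) := by exact_mod_cast hhigh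
      linarith
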